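/- Optimality of the shortest-path payments: let φ be a socially efficient option rule and let (φ, τ) be any mechanism satisfying DSIC and IR. Then for every agent i and type profile v, the proposed payment τ_i^*(v) = −(shortest distance from ⋆ to v_i in G_i(v_{-i})) satisfies τ_i^*(v) ≤ τ_i(v). Consequently the budget of the proposed mechanism, Σ_i τ_i^*(v), is at most the budget Σ_i τ_i(v) of any justified mechanism with option rule φ, for every v. -/

import Mathlib

/-- Total weight of the chain `s → l₀ → l₁ → ⋯` of edges with weights `c`. -/
def chainCost {α : Type*} (c : α → α → ℝ) : α → List α → ℝ
  | _, [] => 0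
  | s, t :: l => c s t + chainCost c t l

/-- Cost of a directed path `⋆ → u₀ → u₁ → ⋯` from the auxiliary source `⋆`. -/
def pathCost {α : Type*} (w0 : α → ℝ) (c : α → α → ℝ) : List α → ℝ
  | [] => 0
  | u :: l => w0 u + chainCost c u l

/-- Optimality of the shortest-path payments: any DSIC and IR mechanism with the
same socially efficient option rule pays every agent at least as much, hence
its budget is at least that of the proposed mechanism. -/
theorem shortest_path_payments_optimal {N X : Type*} [Fintype N] [DecidableEq N]
    (V : N → Set (X → ℝ)) (φ : (N → (X → ℝ)) → X)
    (hSE : ∀ v : N → (X → ℝ), (∀ i, v i ∈ V i) →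
      ∀ x : X, ∑ i, v i x ≤ ∑ i, v i (φ v))
    (τ : N → (N → (X → ℝ)) → ℝ)
    (hDSIC : ∀ v : N → (X → ℝ), (∀ j, v j ∈ V j) → ∀ i : N, ∀ vi' ∈ V i,
      v i (φ (Function.update v i vi')) + τ i (Function.update v i vi')
        ≤ v i (φ v) + τ i v)
    (hIR : ∀ v : N → (X → ℝ), (∀ j, v j ∈ V j) → ∀ i : N,
      0 ≤ v i (φ v) + τ i v)
    (d : N → (N → (X → ℝ)) → (X → ℝ) → ℝ)
    (hd : ∀ (i : N) (v : N → (X → ℝ)), (∀ j, v j ∈ V j) → ∀ t ∈ V i, IsLeast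
      {x : ℝ | ∃ l : List (X → ℝ), (∀ u ∈ l, u ∈ V i) ∧
        x = pathCost (fun u => u (φ (Function.update v i u)))
          (fun s t' => t' (φ (Function.update v i t')) - t' (φ (Function.update v i s)))
          (l ++ [t])} (d i v t)) :
    ∀ v : N → (X → ℝ), (∀ j, v j ∈ V j) →
      (∀ i : N, -(d i v (v i)) ≤ τ i v) ∧
      (∑ i, -(d i v (v i))) ≤ ∑ i, τ i v := by
  intro v hv
  have key : ∀ i : N, -(d i v (v i)) ≤ τ i v := by
    intro i
    set g : (X → ℝ) → ℝ := fun t => τ i (Function.update v i t) with hg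
    set c : (X → ℝ) → (X → ℝ) → ℝ := fun s t' =>
      t' (φ (Function.update v i t')) - t' (φ (Function.update v i s)) with hc
    set w0 : (X → ℝ) → ℝ := fun u => u (φ (Function.update v i u)) with hw0
    have hmem : ∀ t ∈ V i, ∀ j, (Function.update v i t) j ∈ V j := by
      intro t ht j
      rcases eq_or_ne j i with rfl | hji
      · simpa using ht
      · simpa [Function.update_of_ne hji] using hv j
    have edge : ∀ s ∈ V i, ∀ t ∈ V i, g s - g t ≤ c s t := by
      intro s hs t ht
      have := hDSIC (Function.update v i t) (hmem t ht) i s hs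
      simp only [Function.update_idem, Function.update_self] at this
      simp only [hc, hg]
      linarith
    have source : ∀ t ∈ V i, -(g t) ≤ w0 t := by
      intro t ht
      have := hIR (Function.update v i t) (hmem t ht) i
      simp only [Function.update_self] at this
      simp only [hw0, hg]
      linarith
    have chain : ∀ l : List (X → ℝ), (∀ u ∈ l, u ∈ V i) → ∀ s ∈ V i, ∀ t ∈ V i,
        g s - g t ≤ chainCost c s (l ++ [t]) := by
      intro l
      induction l with
      | nil =>
        intro _ s hs t ht
        simpa [chainCost] using edge s hs t ht
      | cons a l ih =>
        intro hl s hs t ht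
        have ha : a ∈ V i := hl a List.mem_cons_self
        have h1 := edge s hs a ha
        have h2 := ih (fun u hu => hl u (List.mem_cons_of_mem a hu)) a ha t ht
        simp only [List.cons_append, chainCost, List.append_eq]
        linarith
    have path : ∀ l : List (X → ℝ), (∀ u ∈ l, u ∈ V i) → ∀ t ∈ V i,
        -(g t) ≤ pathCost w0 c (l ++ [t]) := by
      intro l hl t ht
      cases l with
      | nil => simpa [pathCost, chainCost] using source t ht
      | cons u l' =>
        have hu : u ∈ V i := hl u List.mem_cons_self
        have h1 := source u hu
        have h2 := chain l' (fun x hx => hl x (List.mem_cons_of_mem u hx)) u hu t ht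
        simp only [List.cons_append, pathCost, List.append_eq]
        linarith
    obtain ⟨⟨l, hl, hx⟩, -⟩ := hd i v hv (v i) (hv i)
    have hgv : g (v i) = τ i v := by simp [hg, Function.update_eq_self]
    have := path l hl (v i) (hv i)
    rw [hgv] at this
    rw [hx]
    linarith
  exact ⟨key, Finset.sum_le_sum fun i _ => key i⟩
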